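/- If B > 0, N₀ ∈ ℝ, ω > 0, and 0 < x₀ < K, then the solution x(t) = K·x₀·F(t)/(K - x₀ + x₀·F(t)), with F(t) = exp(Bt + (N₀/ω)(1 - cos(ωt))), converges to K as t → ∞. -/
import Mathlib


open Real Filter

/-- For `B > 0` the solution converges to the carrying capacity `K` as `t → ∞`. -/
theorem logistic_periodic_solution_tendsto_carrying_capacity
    (K ω B N₀ x₀ : ℝ) (hK : 0 < K) (hω : 0 < ω) (hB : 0 < B)
    (hx₀ : 0 < x₀) (hx₀K : x₀ < K)
    (F : ℝ → ℝ)
    (hF : ∀ t, F t = Real.exp (B * t + (N₀ / ω) * (1 - Real.cos (ω * t))))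
    (x : ℝ → ℝ) (hx : ∀ t, x t = K * x₀ * F t / (K - x₀ + x₀ * F t)) :
    Tendsto x atTop (nhds K) := by
  have hFpos : ∀ t, 0 < F t := fun t => by rw [hF]; exact Real.exp_pos _
  set c := N₀ / ω with hc
  have hFtop : Tendsto F atTop atTop := by
    have hlow : Tendsto (fun t => Real.exp (B * t - 2 * |c|)) atTop atTop := by
      apply Real.tendsto_exp_atTop.comp
      exact tendsto_atTop_add_const_right atTop _ (tendsto_id.const_mul_atTop hB)
    apply tendsto_atTop_mono ?_ hlow
    intro t
    rw [hF]
    apply Real.exp_le_exp.mpr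
    have h1 : -(2 * |c|) ≤ c * (1 - Real.cos (ω * t)) := by
      have := neg_abs_le (c * (1 - Real.cos (ω * t)))
      refine le_trans ?_ this
      rw [neg_le_neg_iff, abs_mul]
      have hcos : |1 - Real.cos (ω * t)| ≤ 2 := by
        rw [abs_le]
        constructor <;> nlinarith [Real.neg_one_le_cos (ω * t), Real.cos_le_one (ω * t)]
      calc |c| * |1 - Real.cos (ω * t)| ≤ |c| * 2 := by
            exact mul_le_mul_of_nonneg_left hcos (abs_nonneg c)
        _ = 2 * |c| := by ring
    linarith
  have h0 : Tendsto (fun t => (K - x₀) / F t + x₀) atTop (nhds x₀) := by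
    have := (tendsto_const_nhds (x := K - x₀) (f := atTop)).div_atTop hFtop
    simpa using this.add (tendsto_const_nhds (x := x₀))
  have h2 : Tendsto (fun t => K * x₀ / ((K - x₀) / F t + x₀)) atTop (nhds (K * x₀ / x₀)) :=
    tendsto_const_nhds.div h0 hx₀.ne'
  rw [mul_div_assoc, div_self hx₀.ne', mul_one] at h2
  refine h2.congr fun t => ?_
  rw [hx]
  have hden : 0 < K - x₀ + x₀ * F t := by nlinarith [mul_pos hx₀ (hFpos t)]
  rw [div_add' _ _ _ (hFpos t).ne', div_div_eq_mul_div]
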